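/- For every x ∈ [0,π] the series Σ_{n=1}^∞ ((1 + (−1)^n)/n⁴)·cos(n·x) converges, and π⁴/720 − Σ_{n=1}^∞ ((1 + (−1)^n)/n⁴)·cos(n·x) = x⁴/24 − π·x³/12 + π²·x²/24. -/

import Mathlib

open Real

private theorem stmt15_key (x : ℝ) (hx : x ∈ Set.Icc (0:ℝ) π) :
    HasSum (fun n : ℕ =>
        ((1 + (-1:ℝ) ^ (n + 1)) / ((n : ℝ) + 1) ^ 4) * cos (((n : ℝ) + 1) * x))
      (π ^ 4 / 720 - (x ^ 4 / 24 - π * x ^ 3 / 12 + π ^ 2 * x ^ 2 / 24)) := by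
  have hπ : (0:ℝ) < π := pi_pos
  have hπ' : π ≠ 0 := hπ.ne'
  have hx1 : x / π ∈ Set.Icc (0:ℝ) 1 :=
    ⟨div_nonneg hx.1 hπ.le, by rw [div_le_one hπ]; exact hx.2⟩
  have h := hasSum_one_div_nat_pow_mul_cos (k := 2) two_ne_zero hx1
  have hval : ((-1 : ℝ) ^ (2 + 1) * (2 * π) ^ (2 * 2) / 2 / (Nat.factorial (2 * 2) : ℝ) *
        (Polynomial.map (algebraMap ℚ ℝ) (Polynomial.bernoulli (2 * 2))).eval (x / π))
      = -(π^4/3) * ((x/π)^4 - 2*(x/π)^3 + (x/π)^2 - 1/30) := by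
    have hb : (Polynomial.map (algebraMap ℚ ℝ) (Polynomial.bernoulli 4)).eval (x/π)
        = (x/π)^4 - 2*(x/π)^3 + (x/π)^2 - 1/30 := by
      have b2 : bernoulli 2 = 1/6 := by
        rw [bernoulli, bernoulli'_two]; norm_num
      have b3 : bernoulli 3 = 0 := by
        rw [bernoulli, bernoulli'_three]; norm_num
      have b4 : bernoulli 4 = -1/30 := by
        rw [bernoulli, bernoulli'_four]; norm_num
      simp [Polynomial.bernoulli, Finset.sum_range_succ, b2, b3, b4, Nat.factorial]
      norm_num [Nat.choose]
      ring
    norm_num [hb, Nat.factorial]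
    ring
  rw [hval] at h
  set V : ℝ := (1/8) * (-(π^4/3) * ((x/π)^4 - 2*(x/π)^3 + (x/π)^2 - 1/30)) with hV
  have h2 : HasSum (fun n : ℕ => (1/8) * (1 / (n : ℝ) ^ 4 * cos (2 * n * x))) V := by
    refine (h.mul_left (1/8)).congr_fun fun n => ?_
    have harg : 2 * π * (n:ℝ) * (x / π) = 2 * (n:ℝ) * x := by
      field_simp
    rw [harg]
  have h3 : HasSum (fun n : ℕ => (1/8) * (1 / ((n:ℝ) + 1) ^ 4 * cos (2 * ((n:ℝ)+1) * x))) V := by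
    have h2' : HasSum (fun n : ℕ => (1/8) * (1 / (n : ℝ) ^ 4 * cos (2 * n * x)))
        (V + ∑ i ∈ Finset.range 1, (1/8) * (1 / (i : ℝ) ^ 4 * cos (2 * i * x))) := by
      simpa using h2
    have := (hasSum_nat_add_iff (f := fun n : ℕ => (1/8) * (1 / (n : ℝ) ^ 4 * cos (2 * n * x))) 1).mpr h2'
    simpa using this
  have hg : Function.Injective (fun n : ℕ => 2 * n + 1) := by
    intro a b hab; have h' : 2*a+1 = 2*b+1 := hab; omega
  have h4 : HasSum (fun n : ℕ =>
      ((1 + (-1:ℝ) ^ (n + 1)) / ((n : ℝ) + 1) ^ 4) * cos (((n : ℝ) + 1) * x)) V := by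
    refine (hg.hasSum_iff ?_).mp (h3.congr_fun fun n => ?_)
    · intro n hn
      obtain ⟨m, hm⟩ : ∃ m, n = 2 * m := by
        rcases Nat.even_or_odd n with ⟨m, hm⟩ | ⟨m, hm⟩
        · exact ⟨m, by omega⟩
        · exact absurd ⟨m, show 2*m+1 = n by omega⟩ hn
      subst hm
      have : ((-1:ℝ)) ^ (2 * m + 1) = -1 := by
        rw [pow_succ, pow_mul]; norm_num
      rw [this]; norm_num
    · simp only [Function.comp]
      have he : ((-1:ℝ)) ^ (2 * n + 1 + 1) = 1 := by
        rw [show 2*n+1+1 = 2*(n+1) by ring, pow_mul]; norm_num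
      push_cast
      rw [he, show ((2:ℝ) * n + 1 + 1) = 2 * ((n:ℝ)+1) by ring, mul_pow]
      have hne : ((n:ℝ)+1) ≠ 0 := by positivity
      field_simp
      ring
  have hVeq : V = π ^ 4 / 720 - (x ^ 4 / 24 - π * x ^ 3 / 12 + π ^ 2 * x ^ 2 / 24) := by
    rw [hV, div_pow, div_pow, div_pow]
    field_simp
    ring
  rwa [hVeq] at h4

/-- Eq.(11) of the paper: the cosine series identity
`π⁴/720 - Σ_{n≥1} ((1+(-1)ⁿ)/n⁴) cos (n x) = x⁴/24 - π x³/12 + π² x²/24` on `[0,π]`. -/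
theorem stmt15 :
    ∀ x ∈ Set.Icc (0:ℝ) π,
      Summable (fun n : ℕ =>
        ((1 + (-1:ℝ) ^ (n + 1)) / ((n : ℝ) + 1) ^ 4) * cos (((n : ℝ) + 1) * x)) ∧
      π ^ 4 / 720 - ∑' n : ℕ,
          ((1 + (-1:ℝ) ^ (n + 1)) / ((n : ℝ) + 1) ^ 4) * cos (((n : ℝ) + 1) * x)
        = x ^ 4 / 24 - π * x ^ 3 / 12 + π ^ 2 * x ^ 2 / 24 := by
  intro x hx
  have h := stmt15_key x hx
  exact ⟨h.summable, by rw [h.tsum_eq]; ring⟩
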